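/- arXiv:1503.01604 — 3 statements merged into one kernel-verified Lean document; each statement's English description precedes it below -/
import Mathlib

section
/- Let G and H be terminal graphs with equal terminal sets X_G = X_H, and let G', H' be terminal graphs with G' ∼_P G, H' ∼_P H, X_{G'} = X_G, and X_{H'} = X_H. Then (G ⊕ H) ⊕_T X_G ∼_P (G' ⊕ H') ⊕_T X_{G'}. -/
/-- A plain graph: vertex set and edge set (over an ambient vertex type). -/
structure PGraph (V : Type) where
  verts : Set V
  edges : Set (Sym2 V)

/-- A terminal graph: graph together with an ordered list of terminals. -/
structure TermGraph (V : Type) where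
  verts : Set V
  edges : Set (Sym2 V)
  terms : List V

variable {V : Type} [DecidableEq V]

/-- The map renaming the `i`-th terminal of `K` to the `i`-th terminal of `G`
(used to identify corresponding terminals when gluing). -/
def glueMap (G K : TermGraph V) (x : V) : V :=
  if x ∈ K.terms then G.terms.getD (K.terms.idxOf x) x else x

/-- Gluing `G ⊕ K`: disjoint union with corresponding terminals identified
(parallel edges dropped, result is a plain graph). -/
def oplus (G K : TermGraph V) : PGraph V :=
  ⟨G.verts ∪ (glueMap G K) '' K.verts, G.edges ∪ (Sym2.map (glueMap G K)) '' K.edges⟩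

/-- Gluing, keeping the terminal list of `G` (a terminal graph version of `⊕`). -/
def oplusTG (G K : TermGraph V) : TermGraph V :=
  ⟨G.verts ∪ (glueMap G K) '' K.verts, G.edges ∪ (Sym2.map (glueMap G K)) '' K.edges, G.terms⟩

/-- `G ⊕_T X`: add the vertices of `X` and make `X` the new terminal list. -/
def oplusT (G : TermGraph V) (X : List V) : TermGraph V :=
  ⟨G.verts ∪ {x | x ∈ X}, G.edges, X⟩

/-- `G ⊕_▷ H`: union of vertices and edges, keeping the terminals of `G`. -/
def oplusRhd (G H : TermGraph V) : TermGraph V :=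
  ⟨G.verts ∪ H.verts, G.edges ∪ H.edges, G.terms⟩

/-- The equivalence `G ∼_P H`: same boundary size, and for every terminal
graph `K` of matching boundary size, `P (G ⊕ K) ↔ P (H ⊕ K)`. -/
def EquivP (P : PGraph V → Prop) (G H : TermGraph V) : Prop :=
  G.terms.length = H.terms.length ∧
    ∀ K : TermGraph V, K.terms.length = G.terms.length →
      (P (oplus G K) ↔ P (oplus H K))

/-- `glueMap` only depends on the terminal lists involved. -/
lemma glueMap_congr (A B K : TermGraph V) (h : A.terms = B.terms) :
    glueMap A K = glueMap B K := by
  unfold glueMap; rw [h]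

/-- If the terminal lists agree, the glue map is the identity. -/
lemma glueMap_self (A K : TermGraph V) (h : A.terms = K.terms) :
    glueMap A K = id := by
  funext x
  unfold glueMap
  split
  · rename_i hx
    rw [h, List.getD_eq_getElem _ _ (List.idxOf_lt_length_iff.mpr hx)]
    exact List.getElem_idxOf _
  · rfl

omit [DecidableEq V] in
lemma sym2_map_id_image (s : Set (Sym2 V)) : (Sym2.map (id : V → V)) '' s = s := by
  rw [Sym2.map_id, Set.image_id]

/-- if `X_G = X_H`, `G' ∼_P G`, `H' ∼_P H` with matching terminal
sets, then `(G ⊕ H) ⊕_T X_G ∼_P (G' ⊕ H') ⊕_T X_{G'}`. -/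
theorem oplus_oplusT_equivP (P : PGraph V → Prop) (G H G' H' : TermGraph V)
    (hGH : G.terms = H.terms)
    (hG' : EquivP P G' G) (hH' : EquivP P H' H)
    (hXG : G'.terms = G.terms) (hXH : H'.terms = H.terms) :
    EquivP P (oplusT (oplusTG G H) G.terms) (oplusT (oplusTG G' H') G'.terms) := by
  constructor
  · simp [oplusT, hXG]
  · intro K hK
    have hK' : K.terms.length = G.terms.length := hK
    set f := glueMap G K with hf
    -- the glue maps inside the two big graphs are identities
    have hid1 : glueMap G H = id := glueMap_self _ _ hGH
    have hid2 : glueMap G' H' = id := glueMap_self _ _ (by rw [hXG, hXH, hGH])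
    -- the outer glue maps both equal f
    have hout1 : glueMap (oplusT (oplusTG G H) G.terms) K = f :=
      glueMap_congr _ G K rfl
    have hout2 : glueMap (oplusT (oplusTG G' H') G'.terms) K = f :=
      glueMap_congr _ G K hXG
    -- auxiliary terminal graphs
    set K₁ : TermGraph V :=
      ⟨H.verts ∪ f '' K.verts ∪ {x | x ∈ G.terms},
        H.edges ∪ (Sym2.map f) '' K.edges, G.terms⟩ with hK₁
    set K₂ : TermGraph V :=
      ⟨G'.verts ∪ f '' K.verts ∪ {x | x ∈ G.terms},
        G'.edges ∪ (Sym2.map f) '' K.edges, H.terms⟩ with hK₂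
    have hidGK₁ : glueMap G K₁ = id := glueMap_self _ _ rfl
    have hidG'K₁ : glueMap G' K₁ = id := glueMap_self _ _ hXG
    have hidHK₂ : glueMap H K₂ = id := glueMap_self _ _ rfl
    have hidH'K₂ : glueMap H' K₂ = id := glueMap_self _ _ hXH
    have e1 : oplus (oplusT (oplusTG G H) G.terms) K = oplus G K₁ := by
      unfold oplus
      rw [hout1, hidGK₁]
      simp only [oplusT, oplusTG, hid1, id_eq, Sym2.map_id', Sym2.map_id,
        Set.image_id', Set.image_id, hK₁]
      congr 1 <;> · ext x; simp; aesop
    have e2 : oplus G' K₁ = oplus H K₂ := by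
      unfold oplus
      rw [hidG'K₁, hidHK₂]
      simp only [id_eq, Sym2.map_id', Sym2.map_id, Set.image_id', Set.image_id, hK₁, hK₂]
      congr 1 <;> · ext x; simp; aesop
    have e3 : oplus H' K₂ = oplus (oplusT (oplusTG G' H') G'.terms) K := by
      unfold oplus
      rw [hout2, hidH'K₂]
      simp only [oplusT, oplusTG, hid2, hXG, id_eq, Sym2.map_id', Sym2.map_id,
        Set.image_id', Set.image_id, hK₂]
      congr 1 <;> · ext x; simp; aesop
    have h1 : P (oplus G K₁) ↔ P (oplus G' K₁) :=
      (hG'.2 K₁ (by simp [hK₁, hXG])).symm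
    have h2 : P (oplus H K₂) ↔ P (oplus H' K₂) :=
      (hH'.2 K₂ (by simp [hK₂, hXH, hGH])).symm
    rw [e1, h1, e2, h2, e3]
end

section
/- Let H and H' be terminal graphs with H ∼_P H' and X_H = X_{H'}, and let X be any ordered vertex set of the appropriate boundary size. Then H ⊕_T X ∼_P H' ⊕_T X. -/
variable {V : Type} [DecidableEq V]

lemma glueMap_eq_id (G K : TermGraph V) (h : K.terms = G.terms) : glueMap G K = id := by
  funext x
  simp only [glueMap, h, id]
  by_cases hx : x ∈ G.terms
  · rw [if_pos hx, List.getD_eq_getElem _ _ (List.idxOf_lt_length_iff.mpr hx),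
      List.getElem_idxOf]
  · rw [if_neg hx]

/-- if `H ∼_P H'` with `X_H = X_{H'}` and `X` is an ordered vertex
set of the appropriate boundary size, then `H ⊕_T X ∼_P H' ⊕_T X`. -/
theorem oplusT_equivP (P : PGraph V → Prop) (H H' : TermGraph V) (X : List V)
    (hHH' : EquivP P H H') (hX : H.terms = H'.terms)
    (hlen : X.length = H.terms.length) :
    EquivP P (oplusT H X) (oplusT H' X) := by
  refine ⟨rfl, fun K hK => ?_⟩
  set f := glueMap (oplusT H X) K with hf
  have hf' : glueMap (oplusT H' X) K = f := rfl
  set K' : TermGraph V := ⟨{x | x ∈ X} ∪ f '' K.verts, (Sym2.map f) '' K.edges, H.terms⟩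
    with hK'
  have h1 : oplus (oplusT H X) K = oplus H K' := by
    rw [oplus, oplus, glueMap_eq_id H K' rfl]
    simp only [oplusT, K', Set.image_union, Set.union_assoc, Sym2.map_id,
      Set.image_id, PGraph.mk.injEq]
    exact ⟨rfl, rfl⟩
  have h2 : oplus (oplusT H' X) K = oplus H' K' := by
    rw [oplus, oplus, glueMap_eq_id H' K' hX, hf']
    simp only [oplusT, K', Set.image_union, Set.union_assoc, Sym2.map_id,
      Set.image_id, PGraph.mk.injEq]
  rw [h1, h2]
  exact hHH'.2 K' rfl
end

section
/- Let G be a graph with spanning tree T, and let k = max{vr(G,T), er(G,T) + 1}. Then G has treewidth at most k. Specifically, the tree decomposition obtained by subdividing each tree edge (creating a node for each vertex and each tree edge), putting v in the bag of node v, both endpoints of e in the bag of node e, and adding for each non-tree edge one fixed endpoint to every bag of a vertex or edge on its fundamental cycle, is a valid tree decomposition of width at most k. -/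
open SimpleGraph

/-- The fundamental cycle (w.r.t. the spanning forest `T` of `G`) of the
non-tree edge `e` passes through the vertex `v`. -/
def FundCycThroughV {V : Type} (G T : SimpleGraph V) (v : V) (e : Sym2 V) : Prop :=
  e ∈ G.edgeSet ∧ e ∉ T.edgeSet ∧
    ∃ a b : V, e = s(a, b) ∧ ∃ p : T.Walk a b, p.IsPath ∧ v ∈ p.support

/-- The fundamental cycle (w.r.t. `T`) of the non-tree edge `e` uses the tree
edge `f`. -/
def FundCycUsesE {V : Type} (G T : SimpleGraph V) (f e : Sym2 V) : Prop :=
  e ∈ G.edgeSet ∧ e ∉ T.edgeSet ∧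
    ∃ a b : V, e = s(a, b) ∧ ∃ p : T.Walk a b, p.IsPath ∧ f ∈ p.edges

/-- A tree decomposition of `G` with index (node) type `ι`. -/
structure TreeDecomp {V : Type} (G : SimpleGraph V) (ι : Type) where
  tree : SimpleGraph ι
  isTree : tree.IsTree
  bag : ι → Set V
  mem_bag : ∀ v : V, ∃ t, v ∈ bag t
  edge_bag : ∀ a b : V, G.Adj a b → ∃ t, a ∈ bag t ∧ b ∈ bag t
  coherence : ∀ v : V, (tree.induce {t | v ∈ bag t}).Connected

/-- `G` has treewidth at most `k`: some tree decomposition has all bags of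
size at most `k + 1`. -/
def TreewidthLE {V : Type} (G : SimpleGraph V) (k : ℕ) : Prop :=
  ∃ (ι : Type) (D : TreeDecomp G ι), ∀ t, (D.bag t).ncard ≤ k + 1

namespace TWProof

open Sum

variable {V : Type} {T : SimpleGraph V}

/-- The type of edge nodes of the subdivision. -/
abbrev ENode (T : SimpleGraph V) : Type := {f : Sym2 V // f ∈ T.edgeSet}

/-- The subdivision of `T`: a node for every vertex and every edge of `T`. -/
@[reducible] def SDiv (T : SimpleGraph V) : SimpleGraph (V ⊕ ENode T) where
  Adj x y := (∃ (v : V) (f : ENode T), x = inl v ∧ y = inr f ∧ v ∈ f.1) ∨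
             (∃ (v : V) (f : ENode T), y = inl v ∧ x = inr f ∧ v ∈ f.1)
  symm.symm := fun x y h => by
    rcases h with ⟨v, f, h1, h2, h3⟩ | ⟨v, f, h1, h2, h3⟩
    · exact Or.inr ⟨v, f, h1, h2, h3⟩
    · exact Or.inl ⟨v, f, h1, h2, h3⟩
  loopless.irrefl := by rintro x (⟨v, f, rfl, h, -⟩ | ⟨v, f, h, rfl, -⟩) <;> simp at h

/-- Lift a walk in `T` to a walk in the subdivision. -/
def liftWalk : ∀ {x y : V}, T.Walk x y → (SDiv T).Walk (inl x) (inl y)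
  | _, _, SimpleGraph.Walk.nil => SimpleGraph.Walk.nil
  | _, _, @SimpleGraph.Walk.cons _ _ x z y h q =>
      SimpleGraph.Walk.cons
        (Or.inl ⟨x, ⟨s(x, z), (T.mem_edgeSet).2 h⟩, rfl, rfl, Sym2.mem_mk_left x z⟩)
        (SimpleGraph.Walk.cons
          (Or.inr ⟨z, ⟨s(x, z), (T.mem_edgeSet).2 h⟩, rfl, rfl, Sym2.mem_mk_right x z⟩)
          (liftWalk q))

lemma mem_support_liftWalk : ∀ {x y : V} (p : T.Walk x y) (n : V ⊕ ENode T),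
    n ∈ (liftWalk p).support ↔
      (∃ v, n = inl v ∧ v ∈ p.support) ∨ (∃ f : ENode T, n = inr f ∧ f.1 ∈ p.edges)
  | _, _, SimpleGraph.Walk.nil, n => by
    simp [liftWalk]
  | _, _, @SimpleGraph.Walk.cons _ _ x z y h q, n => by
    have ih := mem_support_liftWalk q n
    simp only [liftWalk, SimpleGraph.Walk.support_cons, SimpleGraph.Walk.edges_cons,
      List.mem_cons] at *
    constructor
    · rintro (rfl | rfl | hn)
      · exact Or.inl ⟨x, rfl, Or.inl rfl⟩
      · exact Or.inr ⟨_, rfl, Or.inl rfl⟩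
      · rcases ih.1 hn with ⟨v, rfl, hv⟩ | ⟨f, rfl, hf⟩
        · exact Or.inl ⟨v, rfl, Or.inr hv⟩
        · exact Or.inr ⟨f, rfl, Or.inr hf⟩
    · rintro (⟨v, rfl, (rfl | hv)⟩ | ⟨f, rfl, (hf | hf)⟩)
      · exact Or.inl rfl
      · exact Or.inr (Or.inr (ih.2 (Or.inl ⟨v, rfl, hv⟩)))
      · refine Or.inr (Or.inl ?_)
        congr 1
        exact Subtype.ext hf
      · exact Or.inr (Or.inr (ih.2 (Or.inr ⟨f, rfl, hf⟩)))

/-- projection of vertex nodes -/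
def pV : V ⊕ ENode T → Option V := Sum.elim some fun _ => none
/-- projection of edge nodes -/
def pE : V ⊕ ENode T → Option (Sym2 V) := Sum.elim (fun _ => none) fun f => some f.1

lemma proj_aux : ∀ (n : ℕ) {m₁ m₂ : V ⊕ ENode T} (c : (SDiv T).Walk m₁ m₂),
    c.length = n → c.IsTrail → ∀ (x y : V), m₁ = inl x → m₂ = inl y →
    ∃ q : T.Walk x y, c.support.filterMap pV = q.support ∧
      c.support.filterMap pE = q.edges := by
  intro n
  induction n using Nat.strongRecOn with
  | ind n ih =>
    intro m₁ m₂ c hlen hc x y h1 h2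
    cases c with
    | nil =>
      subst h1; cases h2
      exact ⟨SimpleGraph.Walk.nil, by simp [pV, pE]⟩
    | @cons _ m' _ h c' =>
      rcases h with ⟨v, f, hx, hm, hv⟩ | ⟨v, f, hm, hx, hv⟩
      · subst hx hm
        cases h1
        cases c' with
        | nil => cases h2
        | @cons _ m'' _ h' c'' =>
          rcases h' with ⟨z, f', hz1, hz2, hz3⟩ | ⟨z, f', hz1, hz2, hz3⟩
          · cases hz1
          · obtain rfl : f = f' := by injection hz2
            subst hz1
            have hxz : x ≠ z := by
              rintro rfl
              have : s(inl x, (inr f : V ⊕ ENode T)) = s(inr f, inl x) := Sym2.eq_swap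
              have hnd := hc.edges_nodup
              simp only [SimpleGraph.Walk.edges_cons, List.nodup_cons, List.mem_cons] at hnd
              exact hnd.1 (Or.inl this)
            have hf : f.1 = s(x, z) := (Sym2.mem_and_mem_iff hxz).1 ⟨hv, hz3⟩
            have hadj : T.Adj x z := T.mem_edgeSet.1 (hf ▸ f.2)
            simp only [SimpleGraph.Walk.length_cons] at hlen
            obtain ⟨q, hqs, hqe⟩ := ih (c''.length) (by omega) c'' rfl
              (hc.of_cons.of_cons) z y rfl h2
            refine ⟨SimpleGraph.Walk.cons hadj q, ?_, ?_⟩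
            · simpa [pV, pE, List.filterMap_cons] using hqs
            · simp only [SimpleGraph.Walk.support_cons, SimpleGraph.Walk.edges_cons,
                List.filterMap_cons]
              simp only [pE, Sum.elim_inl, Sum.elim_inr, hf, List.cons.injEq, true_and]
              exact hqe
      · cases (hx.symm.trans h1 : (inr f : V ⊕ ENode T) = inl x)

lemma exists_inl_mem {m₁ m₂ : V ⊕ ENode T} (c : (SDiv T).Walk m₁ m₂) (hnn : ¬c.Nil) :
    ∃ v : V, inl v ∈ c.support := by
  cases c with
  | nil => simp at hnn
  | cons h c' =>
    rcases h with ⟨w, f, hx, hm, -⟩ | ⟨w, f, hm, hx, -⟩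
    · subst hx
      exact ⟨w, SimpleGraph.Walk.start_mem_support _⟩
    · subst hm
      refine ⟨w, ?_⟩
      rw [SimpleGraph.Walk.support_cons]
      exact List.mem_cons_of_mem _ c'.start_mem_support

lemma exists_inr_mem {v : V} {m₂ : V ⊕ ENode T} (c : (SDiv T).Walk (inl v) m₂) (hnn : ¬c.Nil) :
    ∃ f : ENode T, inr f ∈ c.support := by
  cases c with
  | nil => simp at hnn
  | cons h c' =>
    rcases h with ⟨w, f, hx, hm, -⟩ | ⟨w, f, hm, hx, -⟩
    · subst hm
      refine ⟨f, ?_⟩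
      rw [SimpleGraph.Walk.support_cons]
      exact List.mem_cons_of_mem _ c'.start_mem_support
    · cases hx

lemma sdiv_isAcyclic (hT : T.IsAcyclic) : (SDiv T).IsAcyclic := by
  classical
  intro m c hc
  obtain ⟨v, hv⟩ := exists_inl_mem c hc.not_nil
  have hc2 : (c.rotate (inl v) hv).IsCycle := hc.rotate hv
  generalize c.rotate (inl v) hv = c2 at hc2
  obtain ⟨q, hqs, hqe⟩ := proj_aux c2.length c2 rfl hc2.isTrail v v rfl rfl
  have hsupp : c2.support = inl v :: c2.support.tail := c2.support_eq_cons
  have htailnd : c2.support.tail.Nodup := hc2.support_nodup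
  have hE : q.edges = c2.support.tail.filterMap pE := by
    rw [← hqe, hsupp, List.filterMap_cons]; rfl
  have hS : q.support.tail = c2.support.tail.filterMap pV := by
    have h2 : q.support = v :: c2.support.tail.filterMap pV := by
      rw [← hqs, hsupp, List.filterMap_cons]; rfl
    rw [q.support_eq_cons] at h2
    exact (List.cons.injEq _ _ _ _ ▸ h2).2
  have hinj_pE : ∀ (a a' : V ⊕ ENode T) (b : Sym2 V), b ∈ pE a → b ∈ pE a' → a = a' := by
    rintro (a | a) (a' | a') b hb hb' <;> simp [pE] at hb hb' ⊢
    exact Subtype.ext (by rw [hb, hb'])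
  have hinj_pV : ∀ (a a' : V ⊕ ENode T) (b : V), b ∈ pV a → b ∈ pV a' → a = a' := by
    rintro (a | a) (a' | a') b hb hb' <;> simp [pV] at hb hb' ⊢
    rw [hb, hb']
  have hq : q.IsCycle := by
    refine ⟨⟨⟨?_⟩, ?_⟩, ?_⟩
    · rw [hE]; exact htailnd.filterMap hinj_pE
    · intro hqnil
      have hEnil : q.edges = [] := by rw [hqnil]; rfl
      obtain ⟨f, hf⟩ := exists_inr_mem c2 hc2.not_nil
      have hmem : f.1 ∈ c2.support.filterMap pE := by
        rw [List.mem_filterMap]; exact ⟨inr f, hf, rfl⟩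
      rw [hqe, hEnil] at hmem
      exact absurd hmem List.not_mem_nil
    · rw [hS]; exact htailnd.filterMap hinj_pV
  exact hT q hq

lemma sdiv_connected (hT : T.Connected) : (SDiv T).Connected := by
  have key : ∀ m : V ⊕ ENode T, ∃ v : V, (SDiv T).Reachable m (inl v) := by
    rintro (v | f)
    · exact ⟨v, Reachable.refl _⟩
    · refine ⟨f.1.out.1, SimpleGraph.Adj.reachable ?_⟩
      exact Or.inr ⟨f.1.out.1, f, rfl, rfl, f.1.out_fst_mem⟩
  have hne : Nonempty V := hT.nonempty
  haveI : Nonempty (V ⊕ ENode T) := ⟨inl hne.some⟩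
  refine Connected.mk fun m₁ m₂ => ?_
  obtain ⟨v₁, h₁⟩ := key m₁
  obtain ⟨v₂, h₂⟩ := key m₂
  refine h₁.trans (Reachable.trans ?_ h₂.symm)
  obtain ⟨w⟩ := hT.preconnected v₁ v₂
  exact ⟨liftWalk w⟩

/-- In a tree, any path with the same (unordered) endpoints as a fixed path `p`
has its support and edges inside those of `p`. -/
lemma canonical_path (hT : T.IsTree) {x y a b : V} (hab : s(a, b) = s(x, y))
    (p' : T.Walk a b) (hp' : p'.IsPath) (p : T.Walk x y) (hp : p.IsPath) :
    (∀ v ∈ p'.support, v ∈ p.support) ∧ (∀ f ∈ p'.edges, f ∈ p.edges) := by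
  rcases Sym2.eq_iff.1 hab with ⟨rfl, rfl⟩ | ⟨rfl, rfl⟩
  · have h := hT.2.path_unique ⟨p', hp'⟩ ⟨p, hp⟩
    have hpp : p' = p := congrArg Subtype.val h
    subst hpp
    exact ⟨fun v h => h, fun f h => h⟩
  · have h := hT.2.path_unique ⟨p'.reverse, hp'.reverse⟩ ⟨p, hp⟩
    have hpp : p'.reverse = p := congrArg Subtype.val h
    constructor
    · intro v hv
      rw [← hpp, SimpleGraph.Walk.support_reverse, List.mem_reverse]
      exact hv
    · intro f hf
      rw [← hpp, SimpleGraph.Walk.edges_reverse, List.mem_reverse]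
      exact hf

lemma reach_induce {ι : Type} {S : SimpleGraph ι} {A : Set ι} :
    ∀ {x y : ι} (p : S.Walk x y), (∀ z ∈ p.support, z ∈ A) → ∀ (hx : x ∈ A) (hy : y ∈ A),
    (S.induce A).Reachable ⟨x, hx⟩ ⟨y, hy⟩ := by
  intro x y p
  induction p with
  | nil => intro _ hx hy; exact Reachable.refl _
  | @cons u w t h p ih =>
    intro hsupp hx hy
    have hw : w ∈ A := hsupp w (by simp)
    refine Reachable.trans ?_ (ih (fun z hz => hsupp z (by simp [hz])) hw hy)
    exact SimpleGraph.Adj.reachable (by exact h)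

/-- The chosen endpoint of a (non-tree) edge. -/
noncomputable def pick (e : Sym2 V) : V := e.out.1

lemma pick_mem (e : Sym2 V) : pick e ∈ e := e.out_fst_mem

lemma pick_eq (e : Sym2 V) : s(pick e, e.out.2) = e := by
  rw [pick, Sym2.mk, Prod.mk.eta, e.out_eq]

/-- The bags of the decomposition. -/
def bags (G T : SimpleGraph V) : V ⊕ ENode T → Set V
  | inl v => {v} ∪ pick '' {e | FundCycThroughV G T v e}
  | inr f => {x | x ∈ f.1} ∪ pick '' {e | FundCycUsesE G T f.1 e}

end TWProof

/-- if `T` is a spanning tree of `G` with vertex remember number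
at most `a` and edge remember number at most `b`, then `G` has treewidth at
most `k = max a (b + 1)`. -/
theorem treewidth_le_of_remember_numbers {V : Type} [Fintype V]
    (G T : SimpleGraph V) (hle : T ≤ G) (hT : T.IsTree) (a b : ℕ)
    (hvr : ∀ v : V, {e : Sym2 V | FundCycThroughV G T v e}.ncard ≤ a)
    (her : ∀ f ∈ T.edgeSet, {e : Sym2 V | FundCycUsesE G T f e}.ncard ≤ b) :
    TreewidthLE G (max a (b + 1)) := by
  classical
  open Sum TWProof in
  refine ⟨V ⊕ ENode T,
    { tree := SDiv T
      isTree := ⟨sdiv_connected hT.1, sdiv_isAcyclic hT.2⟩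
      bag := bags G T
      mem_bag := fun v => ⟨inl v, Or.inl rfl⟩
      edge_bag := ?_
      coherence := ?_ }, ?_⟩
  · -- edge_bag
    intro x y hadj
    by_cases he : s(x, y) ∈ T.edgeSet
    · exact ⟨inr ⟨s(x, y), he⟩, Or.inl (Sym2.mem_mk_left x y), Or.inl (Sym2.mem_mk_right x y)⟩
    · obtain ⟨w⟩ := hT.1.preconnected x y
      have hthruX : FundCycThroughV G T x s(x, y) :=
        ⟨hadj, he, x, y, rfl, w.toPath.1, w.toPath.2, w.toPath.1.start_mem_support⟩
      have hthruY : FundCycThroughV G T y s(x, y) :=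
        ⟨hadj, he, x, y, rfl, w.toPath.1, w.toPath.2, w.toPath.1.end_mem_support⟩
      rcases Sym2.mem_iff.1 (pick_mem s(x, y)) with hp | hp
      · exact ⟨inl y, Or.inr ⟨s(x, y), hthruY, hp⟩, Or.inl rfl⟩
      · exact ⟨inl x, Or.inl rfl, Or.inr ⟨s(x, y), hthruX, hp⟩⟩
  · -- coherence
    intro u
    set A : Set (V ⊕ ENode T) := {t | u ∈ bags G T t} with hA
    have huA : inl u ∈ A := Or.inl rfl
    haveI : Nonempty ↥A := ⟨⟨inl u, huA⟩⟩
    -- from a witness (e, pick e = u) we get, for the canonical path of e,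
    -- that all nodes along the lifted path are in A
    have main : ∀ (t : V ⊕ ENode T) (ht : t ∈ A),
        ((SDiv T).induce A).Reachable ⟨t, ht⟩ ⟨inl u, huA⟩ := by
      rintro (v | f) ht
      · rcases id ht with hv | ⟨e, he, hpe⟩
        · cases hv
          exact Reachable.refl _
        · obtain ⟨heG, heT, a', b', hab, p', hp', hvp'⟩ := he
          obtain ⟨p₀, hp₀, -⟩ := hT.existsUnique_path u e.out.2
          have hE : s(u, e.out.2) = e := hpe ▸ pick_eq e
          have hcan := canonical_path hT (hab ▸ hE.symm) p' hp' p₀ hp₀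
          have hvp₀ : v ∈ p₀.support := hcan.1 v hvp'
          have hAll : ∀ z ∈ (liftWalk (p₀.takeUntil v hvp₀)).support, z ∈ A := by
            intro z hz
            rcases (mem_support_liftWalk _ z).1 hz with ⟨v', rfl, hv'⟩ | ⟨f', rfl, hf'⟩
            · exact Or.inr ⟨e, ⟨heG, heT, u, e.out.2, hE.symm, p₀, hp₀,
                p₀.support_takeUntil_subset hvp₀ hv'⟩, hpe⟩
            · exact Or.inr ⟨e, ⟨heG, heT, u, e.out.2, hE.symm, p₀, hp₀,
                p₀.edges_takeUntil_subset hvp₀ hf'⟩, hpe⟩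
          exact (reach_induce _ hAll huA ht).symm
      · rcases id ht with hu | ⟨e, he, hpe⟩
        · refine Reachable.symm (SimpleGraph.Adj.reachable ?_)
          exact (Or.inl ⟨u, f, rfl, rfl, hu⟩ : (SDiv T).Adj (inl u) (inr f))
        · obtain ⟨heG, heT, a', b', hab, p', hp', hfp'⟩ := he
          obtain ⟨p₀, hp₀, -⟩ := hT.existsUnique_path u e.out.2
          have hE : s(u, e.out.2) = e := hpe ▸ pick_eq e
          have hcan := canonical_path hT (hab ▸ hE.symm) p' hp' p₀ hp₀
          have hfp₀ : f.1 ∈ p₀.edges := hcan.2 f.1 hfp'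
          have hmem : (inr f : V ⊕ ENode T) ∈ (liftWalk p₀).support :=
            (mem_support_liftWalk _ _).2 (Or.inr ⟨f, rfl, hfp₀⟩)
          have hAll : ∀ z ∈ ((liftWalk p₀).takeUntil _ hmem).support, z ∈ A := by
            intro z hz
            have hz' := (liftWalk p₀).support_takeUntil_subset hmem hz
            rcases (mem_support_liftWalk _ z).1 hz' with ⟨v', rfl, hv'⟩ | ⟨f', rfl, hf'⟩
            · exact Or.inr ⟨e, ⟨heG, heT, u, e.out.2, hE.symm, p₀, hp₀, hv'⟩, hpe⟩
            · exact Or.inr ⟨e, ⟨heG, heT, u, e.out.2, hE.symm, p₀, hp₀, hf'⟩, hpe⟩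
          exact (reach_induce _ hAll huA ht).symm
    refine Connected.mk fun t₁ t₂ => ?_
    exact (main t₁.1 t₁.2).trans (main t₂.1 t₂.2).symm
  · -- size bound
    rintro (v | f)
    · show (bags G T (inl v)).ncard ≤ max a (b + 1) + 1
      have h1 : (bags G T (inl v)).ncard ≤ 1 + a := by
        refine le_trans (Set.ncard_union_le _ _) ?_
        have := Set.ncard_image_le (f := pick) (s := {e : Sym2 V | FundCycThroughV G T v e})
        have hv := hvr v
        simp only [Set.ncard_singleton]
        omega
      have h2 : a ≤ max a (b + 1) := le_max_left _ _
      omega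
    · show (bags G T (inr f)).ncard ≤ max a (b + 1) + 1
      have h1 : (bags G T (inr f)).ncard ≤ 2 + b := by
        refine le_trans (Set.ncard_union_le _ _) ?_
        have himg := Set.ncard_image_le (f := pick) (s := {e : Sym2 V | FundCycUsesE G T f.1 e})
        have hb := her f.1 f.2
        have hset : {x | x ∈ f.1} ⊆ {pick f.1, f.1.out.2} := by
          intro z hz
          rw [Set.mem_setOf_eq, ← pick_eq f.1, Sym2.mem_iff] at hz
          simpa using hz
        have h2 : ({x | x ∈ f.1} : Set V).ncard ≤ 2 := by
          refine le_trans (Set.ncard_le_ncard hset (Set.toFinite _)) ?_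
          refine le_trans (Set.ncard_insert_le _ _) (by simp)
        omega
      have h2 : b + 1 ≤ max a (b + 1) := le_max_right _ _
      omega
end
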